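/- Let H be a complex Hilbert space and T a densely defined closed symmetric operator on H. Let D be a subspace with dom T ⊆ D ⊆ dom T†, and let S be the restriction of T† to D (so T ⊆ S ⊆ T†). If D = { f ∈ dom T† : for all g ∈ D, ⟨T† f, g⟩ = ⟨f, T† g⟩ } (i.e. D is exactly the Ω-annihilator of itself, where Ω(f,g) = ⟨T† f, g⟩ − ⟨f, T† g⟩), then S is self-adjoint: S† = S. -/

import Mathlib

local notation "⟪" x ", " y "⟫" => @inner ℂ _ _ x y

/-- **Lagrangian boundary conditions yield self-adjoint extensions.**
Let `T` be a densely defined closed symmetric operator on a complex Hilbert space `H`,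
and let `D` be a subspace with `dom T ⊆ D ⊆ dom T†`.  If `D` coincides with its own
annihilator with respect to the symplectic form `Ω(f,g) = ⟪T† f, g⟫ - ⟪f, T† g⟫`, i.e.
for every `f ∈ dom T†` one has `f ∈ D ↔ ∀ g ∈ D, ⟪T† f, g⟫ = ⟪f, T† g⟫`,
then the restriction `S` of `T†` to `D` is self-adjoint: `S† = S`. -/
theorem selfAdjoint_of_lagrangian_boundary_condition
    {H : Type*} [NormedAddCommGroup H] [InnerProductSpace ℂ H] [CompleteSpace H]
    (T : H →ₗ.[ℂ] H) (hdense : Dense (T.domain : Set H))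
    (hclosed : T.IsClosed) (hsym : T ≤ T.adjoint)
    (D : Submodule ℂ H) (hTD : T.domain ≤ D) (hDT : D ≤ T.adjoint.domain)
    (hLag : ∀ f : T.adjoint.domain,
      ((f : H) ∈ D ↔
        ∀ g : T.adjoint.domain, (g : H) ∈ D →
          ⟪T.adjoint f, (g : H)⟫ = ⟪(f : H), T.adjoint g⟫)) :
    (T.adjoint.domRestrict D).adjoint = T.adjoint.domRestrict D := by
  set S := T.adjoint.domRestrict D with hSdef
  have hSdom : S.domain = D ⊓ T.adjoint.domain := LinearPMap.domRestrict_domain _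
  -- membership in S.domain gives membership in D and in T†.domain
  have memDA : ∀ x : S.domain, (x : H) ∈ D ∧ (x : H) ∈ T.adjoint.domain := by
    intro x
    exact Submodule.mem_inf.mp x.2
  have memD : ∀ x : S.domain, (x : H) ∈ D := fun x => (memDA x).1
  have memA : ∀ x : S.domain, (x : H) ∈ T.adjoint.domain := fun x => (memDA x).2
  -- S agrees with T† on its domain
  have hSeq : ∀ (x : S.domain) (y : T.adjoint.domain), (x : H) = (y : H) → S x = T.adjoint y := by
    intro x y hxy
    exact LinearPMap.domRestrict_apply (f := T.adjoint)
      (x := ⟨(x : H), Submodule.mem_inf.mpr (memDA x)⟩) (y := y) hxy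
  -- S.domain is dense since it contains T.domain
  have hTsubS : T.domain ≤ S.domain := by
    intro x hx
    rw [hSdom, Submodule.mem_inf]
    exact ⟨hTD hx, hsym.1 hx⟩
  have hSdense : Dense (S.domain : Set H) := hdense.mono hTsubS
  -- T ≤ S
  have hTS : T ≤ S := by
    refine ⟨hTsubS, fun x y hxy => ?_⟩
    rw [hSeq y ⟨(x : H), hsym.1 x.2⟩ hxy.symm]
    exact hsym.2 (x := x) (y := ⟨(x : H), hsym.1 x.2⟩) rfl
  -- S is symmetric
  have hSymS : S.IsFormalAdjoint S := by
    intro x y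
    have hx := hSeq x ⟨(x : H), memA x⟩ rfl
    have hy := hSeq y ⟨(y : H), memA y⟩ rfl
    rw [hx, hy]
    exact (hLag ⟨(x : H), memA x⟩).mp (memD x) ⟨(y : H), memA y⟩ (memD y)
  have hSleAdj : S ≤ S.adjoint := hSymS.le_adjoint hSdense
  -- S† is a formal adjoint of T, hence S† ≤ T†
  have hFA : S.adjoint.IsFormalAdjoint T := by
    intro x y
    rw [show T y = S ⟨(y : H), hTsubS y.2⟩ from hTS.2 (y := ⟨(y : H), hTsubS y.2⟩) rfl]
    exact LinearPMap.adjoint_isFormalAdjoint hSdense x ⟨(y : H), hTsubS y.2⟩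
  have hAdjLe : S.adjoint ≤ T.adjoint := hFA.symm.le_adjoint hdense
  -- S† ≤ S
  have hAdjLeS : S.adjoint ≤ S := by
    have hdomadj : ∀ x : S.adjoint.domain, (x : H) ∈ S.domain := by
      intro x
      have hxA : (x : H) ∈ T.adjoint.domain := hAdjLe.1 x.2
      have hxval : S.adjoint x = T.adjoint ⟨(x : H), hxA⟩ :=
        hAdjLe.2 (y := ⟨(x : H), hxA⟩) rfl
      have hxD : (x : H) ∈ D := by
        refine (hLag ⟨(x : H), hxA⟩).mpr ?_
        intro g hg
        have hgS : (g : H) ∈ S.domain := by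
          rw [hSdom, Submodule.mem_inf]; exact ⟨hg, g.2⟩
        have := LinearPMap.adjoint_isFormalAdjoint hSdense x ⟨(g : H), hgS⟩
        rw [hSeq ⟨(g : H), hgS⟩ g rfl] at this
        rw [← hxval]
        exact this
      rw [hSdom, Submodule.mem_inf]; exact ⟨hxD, hxA⟩
    refine ⟨fun x hx => hdomadj ⟨x, hx⟩, fun x y hxy => ?_⟩
    have h1 : S.adjoint x = T.adjoint ⟨(x : H), hAdjLe.1 x.2⟩ :=
      hAdjLe.2 (y := ⟨(x : H), hAdjLe.1 x.2⟩) rfl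
    have h2 : S y = T.adjoint ⟨(y : H), memA y⟩ := hSeq y _ rfl
    rw [h1, h2]
    congr 1
    exact Subtype.ext hxy
  exact le_antisymm hAdjLeS hSleAdj
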